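/- Let k ≥ 4 be an integer, a a nonzero complex number, and x₀, …, x_k complex numbers. Set Q(λ) = x_kλ^k + ⋯ + x₁λ + x₀. Then there exist polynomials τ ∈ ℂ[λ] and σ ∈ ℂ[μ] such that σ(λ⁻¹) = λ^{k−2}τ(λ) + aλ⁻²Q(λ)² for all λ ∈ ℂ∖{0} if and only if the k−3 quadratic conditions Σ_{i+j=n, 0≤i,j≤k} x_i x_j = 0 hold for every n with 3 ≤ n ≤ k−1 (equivalently x₀x₃ + x₁x₂ = 0, x₀x₄ + x₁x₃ + x₂²/2 = 0, …, up to n = k−1). -/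

import Mathlib

open Finset in
/-- For `k ≥ 4`, `a ≠ 0` and `Q(λ) = x_k λ^k + ⋯ + x₁ λ + x₀`, there
exist polynomials `τ ∈ ℂ[λ]` and `σ ∈ ℂ[μ]` with
`σ(λ⁻¹) = λ^{k−2} τ(λ) + a λ⁻² Q(λ)²` for all `λ ≠ 0` if and only if the `k−3`
quadratic conditions `Σ_{i+j=n} x_i x_j = 0` hold for all `3 ≤ n ≤ k−1`. -/
theorem stmt_2 (k : ℕ) (hk : 4 ≤ k) (a : ℂ) (ha : a ≠ 0) (x : ℕ → ℂ) :
    (∃ τ σ : Polynomial ℂ, ∀ l : ℂ, l ≠ 0 →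
        σ.eval l⁻¹ = l ^ (k - 2) * τ.eval l
          + a * l⁻¹ ^ 2 * (∑ i ∈ Finset.range (k + 1), x i * l ^ i) ^ 2)
    ↔ (∀ n : ℕ, 3 ≤ n → n ≤ k - 1 →
        ∑ i ∈ Finset.range (n + 1), x i * x (n - i) = 0) := by
  classical
  open Polynomial in
  set P : Polynomial ℂ := ∑ i ∈ Finset.range (k+1), Polynomial.C (x i) * Polynomial.X ^ i
    with hPdef
  have hPcoeff : ∀ i, i ≤ k → P.coeff i = x i := by
    intro i hi
    rw [hPdef, Polynomial.finset_sum_coeff]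
    rw [Finset.sum_eq_single i]
    · simp
    · intro j hj hji
      simp [Polynomial.coeff_C_mul, Polynomial.coeff_X_pow, Ne.symm hji]
    · intro hmem; exact absurd (Finset.mem_range.2 (by omega)) hmem
  have hPeval : ∀ l : ℂ, P.eval l = ∑ i ∈ Finset.range (k+1), x i * l ^ i := by
    intro l; rw [hPdef]; simp [Polynomial.eval_finset_sum]
  have hPdeg : P.natDegree ≤ k := by
    apply Polynomial.natDegree_sum_le_of_forall_le
    intro i hi
    have h1 : (Polynomial.C (x i) * Polynomial.X ^ i).natDegree ≤
        (Polynomial.C (x i)).natDegree + ((Polynomial.X : Polynomial ℂ) ^ i).natDegree :=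
      Polynomial.natDegree_mul_le
    have h2 : ((Polynomial.X : Polynomial ℂ) ^ i).natDegree = i := Polynomial.natDegree_X_pow i
    have h3 : (Polynomial.C (x i)).natDegree = 0 := Polynomial.natDegree_C _
    have h4 : i < k + 1 := Finset.mem_range.1 hi
    omega
  have hc : ∀ n, n ≤ k - 1 → (P^2).coeff n = ∑ i ∈ Finset.range (n+1), x i * x (n-i) := by
    intro n hn
    rw [sq, Polynomial.coeff_mul, Finset.Nat.sum_antidiagonal_eq_sum_range_succ_mk]
    apply Finset.sum_congr rfl
    intro i hi
    have hi' := Finset.mem_range.1 hi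
    rw [hPcoeff i (by omega), hPcoeff (n-i) (by omega)]
  constructor
  · rintro ⟨τ, σ, H⟩ n hn3 hnk
    set d := σ.natDegree with hd
    set F : Polynomial ℂ := ∑ m ∈ Finset.range (d+1),
      Polynomial.C (σ.coeff m) * Polynomial.X ^ (d - m + 2) with hF
    set G : Polynomial ℂ := τ * Polynomial.X ^ (d+k) +
      Polynomial.C a * P^2 * Polynomial.X ^ d with hG
    have hFG : F = G := by
      apply Polynomial.eq_of_infinite_eval_eq
      have hsub : ({(0:ℂ)}ᶜ : Set ℂ) ⊆ {l | Polynomial.eval l F = Polynomial.eval l G} := by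
        intro l hl
        have hl0 : l ≠ 0 := hl
        have hσe : σ.eval l⁻¹ = ∑ m ∈ Finset.range (d+1), σ.coeff m * l⁻¹ ^ m :=
          Polynomial.eval_eq_sum_range' (Nat.lt_succ_self d) _
        have hFe : Polynomial.eval l F = l ^ (d+2) * σ.eval l⁻¹ := by
          rw [hF]
          simp only [Polynomial.eval_finset_sum, Polynomial.eval_mul, Polynomial.eval_pow,
            Polynomial.eval_C, Polynomial.eval_X]
          rw [hσe, Finset.mul_sum]
          apply Finset.sum_congr rfl
          intro m hm
          have hm' : m < d + 1 := Finset.mem_range.1 hm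
          have e1 : l ^ (d - m + 2) * l ^ m = l ^ (d+2) := by
            rw [← pow_add]; congr 1; omega
          have e2 : (l : ℂ) ^ m ≠ 0 := pow_ne_zero _ hl0
          rw [inv_pow]
          field_simp
          linear_combination σ.coeff m * e1
        have hGe : Polynomial.eval l G = l ^ (d+2) * σ.eval l⁻¹ := by
          rw [hG]
          simp only [Polynomial.eval_add, Polynomial.eval_mul, Polynomial.eval_pow,
            Polynomial.eval_C, Polynomial.eval_X]
          rw [H l hl0, hPeval]
          have e3 : l ^ (d+2) * l ^ (k-2) = l ^ (d+k) := by
            rw [← pow_add]; congr 1; omega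
          have e4 : l ^ (d+2) * l⁻¹ ^ 2 = l ^ d := by
            rw [inv_pow]
            have : l ^ (d+2) = l ^ d * l ^ 2 := by rw [← pow_add]
            rw [this, mul_assoc, mul_inv_cancel₀ (pow_ne_zero 2 hl0), mul_one]
          set S := ∑ i ∈ Finset.range (k + 1), x i * l ^ i
          linear_combination (-(Polynomial.eval l τ)) * e3 - a * S^2 * e4
        exact hFe.trans hGe.symm
      exact Set.Infinite.mono hsub ((Set.finite_singleton (0:ℂ)).infinite_compl)
    have hFc : F.coeff (n+d) = 0 := by
      rw [hF, Polynomial.finset_sum_coeff]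
      apply Finset.sum_eq_zero
      intro m hm
      have hm' : m < d + 1 := Finset.mem_range.1 hm
      rw [Polynomial.coeff_C_mul, Polynomial.coeff_X_pow, if_neg (by omega), mul_zero]
    have hGc : G.coeff (n+d) = a * (P^2).coeff n := by
      rw [hG, Polynomial.coeff_add, Polynomial.coeff_mul_X_pow', Polynomial.coeff_mul_X_pow',
        if_neg (by omega), if_pos (by omega)]
      simp
    have hz : a * (P^2).coeff n = 0 := by
      rw [← hGc, ← hFG, hFc]
    have h0 : (P^2).coeff n = 0 := by
      rcases mul_eq_zero.1 hz with h | h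
      · exact absurd h ha
      · exact h
    rw [← hc n hnk]; exact h0
  · intro h
    set c : ℕ → ℂ := fun n => (P^2).coeff n with hcdef
    refine ⟨∑ j ∈ Finset.range (k+1), Polynomial.C (-(a * c (k+j))) * Polynomial.X ^ j,
            Polynomial.C (a * c 2) + Polynomial.C (a * c 1) * Polynomial.X +
              Polynomial.C (a * c 0) * Polynomial.X ^ 2, ?_⟩
    intro l hl
    have hdeg2 : (P^2).natDegree < 2*k+1 := by
      have h1 : (P^2).natDegree ≤ 2 * P.natDegree := Polynomial.natDegree_pow_le
      omega
    have hsum : (P^2).eval l =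
        (c 0 + c 1 * l + c 2 * l^2) + ∑ j ∈ Finset.range (k+1), c (k+j) * l^(k+j) := by
      rw [Polynomial.eval_eq_sum_range' hdeg2]
      rw [Finset.range_eq_Ico,
        ← Finset.sum_Ico_consecutive _ (show 0 ≤ k by omega) (show k ≤ 2*k+1 by omega),
        ← Finset.sum_Ico_consecutive _ (show 0 ≤ 3 by omega) (show 3 ≤ k by omega)]
      have h1 : ∑ i ∈ Finset.Ico 0 3, (P^2).coeff i * l^i = c 0 + c 1 * l + c 2 * l^2 := by
        rw [← Finset.range_eq_Ico, Finset.sum_range_succ, Finset.sum_range_succ,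
          Finset.sum_range_one]
        simp only [hcdef]
        ring
      have h2 : ∑ i ∈ Finset.Ico 3 k, (P^2).coeff i * l^i = 0 := by
        apply Finset.sum_eq_zero
        intro i hi
        have hi' := Finset.mem_Ico.1 hi
        rw [hc i (by omega), h i hi'.1 (by omega), zero_mul]
      have h3 : ∑ i ∈ Finset.Ico k (2*k+1), (P^2).coeff i * l^i =
          ∑ j ∈ Finset.range (k+1), c (k+j) * l^(k+j) := by
        rw [Finset.sum_Ico_eq_sum_range]
        have e : 2*k+1-k = k+1 := by omega
        rw [e]
      rw [h1, h2, h3]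
      simp only [Finset.range_eq_Ico]
      ring
    have hQ : (∑ i ∈ Finset.range (k+1), x i * l^i) = P.eval l := (hPeval l).symm
    rw [hQ, ← Polynomial.eval_pow, hsum]
    apply mul_left_cancel₀ (pow_ne_zero 2 hl : l^2 ≠ 0)
    have htau : l^2 * (l^(k-2) * Polynomial.eval l
        (∑ j ∈ Finset.range (k+1), Polynomial.C (-(a * c (k+j))) * Polynomial.X ^ j)) =
        -(a * ∑ j ∈ Finset.range (k+1), c (k+j) * l^(k+j)) := by
      rw [Polynomial.eval_finset_sum]
      simp only [Polynomial.eval_mul, Polynomial.eval_pow, Polynomial.eval_C, Polynomial.eval_X]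
      rw [Finset.mul_sum, Finset.mul_sum, Finset.mul_sum, ← Finset.sum_neg_distrib]
      apply Finset.sum_congr rfl
      intro j hj
      have e : l^2 * l^(k-2) * l^j = l^(k+j) := by
        rw [← pow_add, ← pow_add]; congr 1; omega
      linear_combination (-(a * c (k+j))) * e
    have hσ : l^2 * Polynomial.eval l⁻¹
        (Polynomial.C (a * c 2) + Polynomial.C (a * c 1) * Polynomial.X +
          Polynomial.C (a * c 0) * Polynomial.X ^ 2) =
        a * c 2 * l^2 + a * c 1 * l + a * c 0 := by
      simp only [Polynomial.eval_add, Polynomial.eval_mul, Polynomial.eval_pow,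
        Polynomial.eval_C, Polynomial.eval_X]
      field_simp
    have hinv : l^2 * l⁻¹^2 = 1 := by
      rw [inv_pow, mul_inv_cancel₀ (pow_ne_zero 2 hl)]
    linear_combination hσ - htau -
      (a * ((c 0 + c 1 * l + c 2 * l^2) + ∑ j ∈ Finset.range (k+1), c (k+j) * l^(k+j))) * hinv
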